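/- L² lower semicontinuity for measure–function pairs: let μ_m (m ∈ ℕ) and μ be finite Borel measures on ℝⁿ with μ_m → μ weakly, i.e. ∫ φ dμ_m → ∫ φ dμ for every continuous compactly supported φ : ℝⁿ → ℝ. Let f_m ∈ L²(μ_m; ℝᵈ) and f ∈ L²(μ; ℝᵈ) be such that ∫ ⟨f_m, φ⟩ dμ_m → ∫ ⟨f, φ⟩ dμ for every continuous compactly supported φ : ℝⁿ → ℝᵈ. Then ∫ |f|² dμ ≤ liminf_{m→∞} ∫ |f_m|² dμ_m. -/

import Mathlib

open MeasureTheory Filter Topology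
open scoped RealInnerProductSpace ENNReal

section Aux

variable {α : Type*} [MeasurableSpace α] {ν : Measure α}
  {E : Type*} [NormedAddCommGroup E] [InnerProductSpace ℝ E]

lemma aux_integrable_inner {g h : α → E} (hg : MemLp g 2 ν) (hh : MemLp h 2 ν) :
    Integrable (fun x => ⟪g x, h x⟫) ν := by
  have := L2.integrable_inner (𝕜 := ℝ) (hg.toLp g) (hh.toLp h)
  refine this.congr ?_
  filter_upwards [hg.coeFn_toLp, hh.coeFn_toLp] with x h1 h2
  rw [h1, h2]

lemma aux_CS {g h : α → E} (hg : MemLp g 2 ν) (hh : MemLp h 2 ν) :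
    ENNReal.ofReal (∫ x, ⟪g x, h x⟫ ∂ν) ≤ eLpNorm g 2 ν * eLpNorm h 2 ν := by
  have h1 : ∫ x, ⟪g x, h x⟫ ∂ν ≤ (eLpNorm g 2 ν).toReal * (eLpNorm h 2 ν).toReal := by
    have hcs := real_inner_le_norm (hg.toLp g) (hh.toLp h)
    rw [L2.inner_def] at hcs
    rw [Lp.norm_toLp, Lp.norm_toLp] at hcs
    refine le_trans (le_of_eq ?_) hcs
    refine integral_congr_ae ?_
    filter_upwards [hg.coeFn_toLp, hh.coeFn_toLp] with x h1 h2
    rw [h1, h2]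
  calc ENNReal.ofReal (∫ x, ⟪g x, h x⟫ ∂ν)
      ≤ ENNReal.ofReal ((eLpNorm g 2 ν).toReal * (eLpNorm h 2 ν).toReal) :=
        ENNReal.ofReal_le_ofReal h1
    _ = eLpNorm g 2 ν * eLpNorm h 2 ν := by
        rw [ENNReal.ofReal_mul ENNReal.toReal_nonneg, ENNReal.ofReal_toReal hg.2.ne,
          ENNReal.ofReal_toReal hh.2.ne]

omit [InnerProductSpace ℝ E] in
lemma aux_sq {g : α → E} (hg : MemLp g 2 ν) :
    (eLpNorm g 2 ν) ^ 2 = ENNReal.ofReal (∫ x, ‖g x‖ ^ 2 ∂ν) := by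
  rw [hg.eLpNorm_eq_integral_rpow_norm two_ne_zero ENNReal.ofNat_ne_top]
  have h2 : (2 : ℝ≥0∞).toReal = (2 : ℝ) := by simp
  rw [h2]
  have hnn : 0 ≤ ∫ x, ‖g x‖ ^ (2:ℝ) ∂ν :=
    integral_nonneg fun x => Real.rpow_nonneg (norm_nonneg _) _
  rw [← ENNReal.ofReal_pow (Real.rpow_nonneg hnn _)]
  congr 1
  · rw [← Real.rpow_natCast ((∫ x, ‖g x‖ ^ (2:ℝ) ∂ν) ^ (2:ℝ)⁻¹) 2, ← Real.rpow_mul hnn]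
    norm_num

end Aux

/-- L² lower semicontinuity for measure–function pairs: if `μ_m → μ` weakly, `f_m ∈ L²(μ_m)`,
`f ∈ L²(μ)` and `∫ ⟨f_m, φ⟩ dμ_m → ∫ ⟨f, φ⟩ dμ` for every continuous compactly supported
vector field `φ`, then `∫ |f|² dμ ≤ liminf_m ∫ |f_m|² dμ_m`. -/
theorem L2_lower_semicontinuity {n d : ℕ}
    (μseq : ℕ → Measure (EuclideanSpace ℝ (Fin n)))
    (μ : Measure (EuclideanSpace ℝ (Fin n)))
    (hfin : ∀ m, IsFiniteMeasure (μseq m)) (hfinμ : IsFiniteMeasure μ)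
    (hconv : ∀ φ : EuclideanSpace ℝ (Fin n) → ℝ, Continuous φ → HasCompactSupport φ →
      Tendsto (fun m => ∫ x, φ x ∂(μseq m)) atTop (𝓝 (∫ x, φ x ∂μ)))
    (fseq : ℕ → EuclideanSpace ℝ (Fin n) → EuclideanSpace ℝ (Fin d))
    (f : EuclideanSpace ℝ (Fin n) → EuclideanSpace ℝ (Fin d))
    (hfm : ∀ m, MemLp (fseq m) 2 (μseq m)) (hf : MemLp f 2 μ)
    (hpair : ∀ φ : EuclideanSpace ℝ (Fin n) → EuclideanSpace ℝ (Fin d),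
      Continuous φ → HasCompactSupport φ →
      Tendsto (fun m => ∫ x, ⟪fseq m x, φ x⟫ ∂(μseq m)) atTop (𝓝 (∫ x, ⟪f x, φ x⟫ ∂μ))) :
    ENNReal.ofReal (∫ x, ‖f x‖ ^ 2 ∂μ) ≤
      liminf (fun m => ENNReal.ofReal (∫ x, ‖fseq m x‖ ^ 2 ∂(μseq m))) atTop := by
  haveI := hfinμ
  haveI := hfin
  set Em : ℕ → ℝ≥0∞ := fun m => eLpNorm (fseq m) 2 (μseq m) with hEm
  set E0 : ℝ≥0∞ := eLpNorm f 2 μ with hE0def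
  have hrw : (fun m => ENNReal.ofReal (∫ x, ‖fseq m x‖ ^ 2 ∂(μseq m))) = fun m => Em m ^ 2 :=
    funext fun m => (aux_sq (hfm m)).symm
  rw [← aux_sq hf, hrw]
  -- it suffices to prove `E0 ≤ liminf Em`
  suffices hkey : E0 ≤ liminf Em atTop by
    calc E0 ^ 2 ≤ (liminf Em atTop) ^ 2 := pow_le_pow_left' hkey 2
      _ = liminf Em atTop * liminf Em atTop := sq (liminf Em atTop)
      _ ≤ liminf (Em * Em) atTop := ENNReal.le_liminf_mul
      _ = liminf (fun m => Em m ^ 2) atTop := by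
          congr 1; funext m; simp [pow_two]
  -- trivial cases
  by_cases hL : liminf Em atTop = ∞
  · simp [hL]
  by_cases hE0 : E0 = 0
  · simp [hE0]
  -- main estimate, for every positive real ε
  have main : ∀ ε : ℝ, 0 < ε →
      E0 ^ 2 ≤ (E0 + ENNReal.ofReal ε) * liminf Em atTop + E0 * ENNReal.ofReal ε := by
    intro ε hε
    obtain ⟨φ, hφc, hφe, hφcont, hφmem⟩ :=
      hf.exists_hasCompactSupport_eLpNorm_sub_le ENNReal.ofNat_ne_top
        (ε := ENNReal.ofReal ε) (ENNReal.ofReal_pos.2 hε).ne'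
    have hφm : ∀ m, MemLp φ 2 (μseq m) := fun m =>
      hφcont.memLp_of_hasCompactSupport hφc
    -- decomposition of ∫‖f‖²
    have hdecomp : ∫ x, ‖f x‖ ^ 2 ∂μ =
        (∫ x, ⟪f x, φ x⟫ ∂μ) + ∫ x, ⟪f x, f x - φ x⟫ ∂μ := by
      have hadd := integral_add (aux_integrable_inner hf hφmem)
        (aux_integrable_inner hf (hf.sub hφmem))
      simp only [Pi.sub_apply] at hadd
      rw [← hadd]
      refine integral_congr_ae (ae_of_all _ fun x => ?_)
      show ‖f x‖ ^ 2 = ⟪f x, φ x⟫ + ⟪f x, f x - φ x⟫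
      rw [inner_sub_right, real_inner_self_eq_norm_sq]
      ring
    -- the error term
    have herr : ENNReal.ofReal (∫ x, ⟪f x, f x - φ x⟫ ∂μ) ≤ E0 * ENNReal.ofReal ε := by
      refine le_trans (aux_CS hf (hf.sub hφmem)) ?_
      exact mul_le_mul_right hφe _
    -- convergence of ∫‖φ‖² dμ_m
    have hφsq : Tendsto (fun m => ENNReal.ofReal (∫ x, ‖φ x‖ ^ 2 ∂(μseq m))) atTop
        (𝓝 (ENNReal.ofReal (∫ x, ‖φ x‖ ^ 2 ∂μ))) := by
      refine ENNReal.tendsto_ofReal (hconv (fun x => ‖φ x‖ ^ 2) (by continuity) ?_)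
      have : (fun x => ‖φ x‖ ^ 2) = (fun y : EuclideanSpace ℝ (Fin d) => ‖y‖ ^ 2) ∘ φ := rfl
      rw [this]
      exact hφc.comp_left (by simp)
    -- convergence of eLpNorm φ 2 (μseq m) to eLpNorm φ 2 μ
    have hEφ : Tendsto (fun m => eLpNorm φ 2 (μseq m)) atTop (𝓝 (eLpNorm φ 2 μ)) := by
      have hsq : ∀ (ν : Measure (EuclideanSpace ℝ (Fin n))) (hν : MemLp φ 2 ν),
          eLpNorm φ 2 ν = (ENNReal.ofReal (∫ x, ‖φ x‖ ^ 2 ∂ν)) ^ (2⁻¹ : ℝ) := by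
        intro ν hν
        rw [← aux_sq hν, ← ENNReal.rpow_natCast (eLpNorm φ 2 ν) 2, ← ENNReal.rpow_mul]
        norm_num
      have hcont : Continuous fun x : ℝ≥0∞ => x ^ (2⁻¹ : ℝ) := ENNReal.continuous_rpow_const
      have := (hcont.tendsto _).comp hφsq
      simp only [Function.comp_def] at this
      rw [hsq μ hφmem]
      exact this.congr fun m => (hsq (μseq m) (hφm m)).symm
    have hlimsupφ : limsup (fun m => eLpNorm φ 2 (μseq m)) atTop = eLpNorm φ 2 μ :=
      hEφ.limsup_eq
    -- bound on eLpNorm φ 2 μ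
    have hφbound : eLpNorm φ 2 μ ≤ E0 + ENNReal.ofReal ε := by
      have : eLpNorm φ 2 μ = eLpNorm (f - (f - φ)) 2 μ := by
        congr 1; ext x; simp
      rw [this]
      refine le_trans (eLpNorm_sub_le hf.aestronglyMeasurable
        (hf.sub hφmem).aestronglyMeasurable one_le_two) ?_
      exact add_le_add le_rfl hφe
    -- main term
    have hmain : ENNReal.ofReal (∫ x, ⟪f x, φ x⟫ ∂μ) ≤
        (E0 + ENNReal.ofReal ε) * liminf Em atTop := by
      have hlim := ENNReal.tendsto_ofReal (hpair φ hφcont hφc)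
      rw [← hlim.liminf_eq]
      calc liminf (fun m => ENNReal.ofReal (∫ x, ⟪fseq m x, φ x⟫ ∂(μseq m))) atTop
          ≤ liminf (fun m => eLpNorm φ 2 (μseq m) * Em m) atTop := by
            refine liminf_le_liminf (Eventually.of_forall fun m => ?_)
            exact le_trans (aux_CS (hfm m) (hφm m)) (le_of_eq (mul_comm _ _))
        _ ≤ limsup (fun m => eLpNorm φ 2 (μseq m)) atTop * liminf Em atTop := by
            refine ENNReal.liminf_mul_le (Or.inr hL) (Or.inl ?_)
            rw [hlimsupφ]
            exact (lt_of_le_of_lt hφbound (ENNReal.add_lt_top.2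
              ⟨hf.2, ENNReal.ofReal_lt_top⟩)).ne
        _ ≤ (E0 + ENNReal.ofReal ε) * liminf Em atTop := by
            rw [hlimsupφ]
            exact mul_le_mul_left hφbound _
    calc E0 ^ 2 = ENNReal.ofReal (∫ x, ‖f x‖ ^ 2 ∂μ) := aux_sq hf
      _ = ENNReal.ofReal ((∫ x, ⟪f x, φ x⟫ ∂μ) + ∫ x, ⟪f x, f x - φ x⟫ ∂μ) := by rw [hdecomp]
      _ ≤ ENNReal.ofReal (∫ x, ⟪f x, φ x⟫ ∂μ) +
          ENNReal.ofReal (∫ x, ⟪f x, f x - φ x⟫ ∂μ) := ENNReal.ofReal_add_le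
      _ ≤ (E0 + ENNReal.ofReal ε) * liminf Em atTop + E0 * ENNReal.ofReal ε :=
          add_le_add hmain herr
  -- convert to real numbers
  set a : ℝ := E0.toReal with ha
  set l : ℝ := (liminf Em atTop).toReal with hl
  have hE0top : E0 ≠ ∞ := hf.2.ne
  have hapos : 0 < a := ENNReal.toReal_pos hE0 hE0top
  have hlnn : 0 ≤ l := ENNReal.toReal_nonneg
  have hreal : ∀ ε : ℝ, 0 < ε → a ^ 2 ≤ (a + ε) * l + a * ε := by
    intro ε hε
    have h := main ε hε
    have hrhs : ((E0 + ENNReal.ofReal ε) * liminf Em atTop + E0 * ENNReal.ofReal ε) ≠ ∞ := by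
      refine ENNReal.add_ne_top.2 ⟨ENNReal.mul_ne_top (ENNReal.add_ne_top.2
        ⟨hE0top, ENNReal.ofReal_ne_top⟩) hL, ENNReal.mul_ne_top hE0top ENNReal.ofReal_ne_top⟩
    have := ENNReal.toReal_mono hrhs h
    rw [ENNReal.toReal_pow, ENNReal.toReal_add (ENNReal.mul_ne_top (ENNReal.add_ne_top.2
        ⟨hE0top, ENNReal.ofReal_ne_top⟩) hL) (ENNReal.mul_ne_top hE0top ENNReal.ofReal_ne_top),
      ENNReal.toReal_mul, ENNReal.toReal_mul, ENNReal.toReal_add hE0top ENNReal.ofReal_ne_top,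
      ENNReal.toReal_ofReal hε.le] at this
    exact this
  have hal : a ^ 2 ≤ a * l := by
    refine le_of_forall_pos_le_add fun δ hδ => ?_
    have hε : 0 < δ / (l + a + 1) := div_pos hδ (by linarith)
    have h := hreal _ hε
    have : (δ / (l + a + 1)) * (l + a) ≤ δ := by
      rw [div_mul_eq_mul_div, div_le_iff₀ (by linarith)]
      nlinarith
    nlinarith
  have hale : a ≤ l := by nlinarith
  rw [← ENNReal.ofReal_toReal hE0top, ← ENNReal.ofReal_toReal hL]
  exact ENNReal.ofReal_le_ofReal hale
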